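/- Assume 0 < K ≤ κ + α(s) for all s. Then for every m = 1,…,n and every t with T_{m−1} ≤ t < T_m one has π_m(t) = (exp(−∫₀ᵗ α(s) ds)/κ)[κ + α(t) − K e^{−∫ₜ^{T_m}(κ+α(s)) ds}] > 0; consequently H¹_m(t) := −(κ + α(t)) exp(−∫₀ᵗ α(s) ds) + c_m K e^{−κ(T_m−t)} = −κ π_m(t) < 0. -/

import Mathlib

open intervalIntegral Real Filter

/-- `exp(-∫₀ᵗ α(s) ds)`. -/
noncomputable def ed (α : ℝ → ℝ) (t : ℝ) : ℝ := Real.exp (-∫ s in (0:ℝ)..t, α s)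

/-- `c_i = exp(-∫₀^{T_i} α(s) ds)`. -/
noncomputable def c (α : ℝ → ℝ) (T : ℕ → ℝ) (i : ℕ) : ℝ := ed α (T i)

/-- `G¹_m(t) = exp(-∫₀ᵗ α) - c_n e^{-κ(T_n-t)} - c_m (T_m-t) K e^{-κ(T_m-t)}
  - ΔK ∑_{j=m+1}^n c_j e^{-κ(T_j-t)}`. -/
noncomputable def G1 (α : ℝ → ℝ) (T : ℕ → ℝ) (n : ℕ) (κ Δ K : ℝ) (m : ℕ) (t : ℝ) : ℝ :=
  ed α t - c α T n * Real.exp (-κ * (T n - t))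
    - c α T m * ((T m - t) * K) * Real.exp (-κ * (T m - t))
    - Δ * K * ∑ j ∈ Finset.Icc (m + 1) n, c α T j * Real.exp (-κ * (T j - t))

/-- `Ĝ¹_m(t) = exp(-∫₀ᵗ α) - c_n - c_m (T_m-t) K - ΔK ∑_{j=m+1}^n c_j`. -/
noncomputable def Ghat1 (α : ℝ → ℝ) (T : ℕ → ℝ) (n : ℕ) (Δ K : ℝ) (m : ℕ) (t : ℝ) : ℝ :=
  ed α t - c α T n - c α T m * ((T m - t) * K)
    - Δ * K * ∑ j ∈ Finset.Icc (m + 1) n, c α T j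

/-- `G²_m(t) = θ(Ĝ¹_m(t) − G¹_m(t)) + Ĝ¹_m(t)`. -/
noncomputable def G2 (α : ℝ → ℝ) (T : ℕ → ℝ) (n : ℕ) (κ θ Δ K : ℝ) (m : ℕ) (t : ℝ) : ℝ :=
  θ * (Ghat1 α T n Δ K m t - G1 α T n κ Δ K m t) + Ghat1 α T n Δ K m t

/-- `π_m(t) = (1/κ)[exp(−∫₀ᵗ α)(κ + α(t)) − c_m K e^{−κ(T_m−t)}]`. -/
noncomputable def piF (α : ℝ → ℝ) (T : ℕ → ℝ) (κ K : ℝ) (m : ℕ) (t : ℝ) : ℝ :=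
  (1 / κ) * (ed α t * (κ + α t) - c α T m * K * Real.exp (-κ * (T m - t)))

/-- `H¹_m(t) = −(κ + α(t)) exp(−∫₀ᵗ α) + c_m K e^{−κ(T_m−t)}`. -/
noncomputable def H1 (α : ℝ → ℝ) (T : ℕ → ℝ) (κ K : ℝ) (m : ℕ) (t : ℝ) : ℝ :=
  -(κ + α t) * ed α t + c α T m * K * Real.exp (-κ * (T m - t))

/-- If `0 < K ≤ κ + α(s)` for all `s`, then on `[T_{m-1}, T_m)` one has
`π_m(t) = (e^{−∫₀ᵗ α}/κ)[κ + α(t) − K e^{−∫ₜ^{T_m}(κ+α)}] > 0`, and consequently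
`H¹_m(t) = −κ π_m(t) < 0`. -/
theorem stmt_7 (n : ℕ) (hn : 1 ≤ n) (T : ℕ → ℝ) (Δ κ θ K : ℝ)
    (hT0 : 0 < T 0) (hΔ : 0 < Δ)
    (hten : ∀ i, 1 ≤ i → i ≤ n → T i - T (i - 1) = Δ)
    (hκ : 0 < κ) (hθ : 0 < θ) (α : ℝ → ℝ) (hα : Continuous α)
    (hK : 0 < K) (hKκα : ∀ s, K ≤ κ + α s)
    (m : ℕ) (hm : 1 ≤ m) (hmn : m ≤ n)
    (t : ℝ) (ht1 : T (m - 1) ≤ t) (ht2 : t < T m) :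
    piF α T κ K m t
        = ed α t / κ *
            (κ + α t - K * Real.exp (-∫ s in t..(T m), (κ + α s))) ∧
      0 < piF α T κ K m t ∧
      H1 α T κ K m t = -κ * piF α T κ K m t ∧
      H1 α T κ K m t < 0 := by
  have hint : (∫ s in t..(T m), (κ + α s)) = κ * (T m - t) + ∫ s in t..(T m), α s := by
    rw [intervalIntegral.integral_add intervalIntegrable_const (hα.intervalIntegrable _ _),
      intervalIntegral.integral_const]
    ring_nf
  have hc : c α T m = ed α t * Real.exp (-∫ s in t..(T m), α s) := by
    rw [c, ed, ed, ← Real.exp_add]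
    congr 1
    rw [← intervalIntegral.integral_add_adjacent_intervals (a := (0:ℝ)) (b := t) (c := T m)
      (hα.intervalIntegrable _ _) (hα.intervalIntegrable _ _)]
    ring
  have hsplit : Real.exp (-∫ s in t..(T m), (κ + α s))
      = Real.exp (-κ * (T m - t)) * Real.exp (-∫ s in t..(T m), α s) := by
    rw [← Real.exp_add, hint]; ring_nf
  have heq : piF α T κ K m t
      = ed α t / κ * (κ + α t - K * Real.exp (-∫ s in t..(T m), (κ + α s))) := by
    rw [piF, hc, hsplit]; ring
  have hIpos : 0 < ∫ s in t..(T m), (κ + α s) := by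
    apply intervalIntegral.intervalIntegral_pos_of_pos_on
      ((continuous_const.add hα).intervalIntegrable _ _)
    · intro x _; exact lt_of_lt_of_le hK (hKκα x)
    · exact ht2
  have hexp : Real.exp (-∫ s in t..(T m), (κ + α s)) < 1 := by
    rw [Real.exp_lt_one_iff]; linarith
  have hedpos : 0 < ed α t := Real.exp_pos _
  have hpos : 0 < piF α T κ K m t := by
    rw [heq]
    have h1 : K * Real.exp (-∫ s in t..(T m), (κ + α s)) < K := by
      nlinarith [Real.exp_pos (-∫ s in t..(T m), (κ + α s))]
    have h2 := hKκα t
    have h0 : 0 < κ + α t - K * Real.exp (-∫ s in t..(T m), (κ + α s)) := by linarith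
    exact mul_pos (div_pos hedpos hκ) h0
  have hH : H1 α T κ K m t = -κ * piF α T κ K m t := by
    rw [H1, piF]; field_simp; ring
  refine ⟨heq, hpos, hH, ?_⟩
  rw [hH]
  nlinarith
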